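/- Let N be a feed-forward network with layers C₀, C₁, …, C_m and adjacency matrices A₁, …, A_k, and let f₀, …, f_k be reals with f₀ + Σ_{i=1}^k f_i = 0 and f₀ ≠ 0. Then the generalized kernel of J = f₀·Id + Σ_{i=1}^k f_i·A_i has dimension |C₀|. -/
import Mathlib


/-- for a feed-forward network with first layer `C₀`, when the
bifurcation condition is associated to the valency (`f₀ + Σ f_i = 0`, `f₀ ≠ 0`),
the generalized kernel of `J = f₀·Id + Σ f_i·A_i` has dimension `|C₀|`. -/
theorem stmt_11 {C : Type*} [Fintype C] [DecidableEq C] {k : ℕ}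
    (σ : Fin k → C → C) (m : ℕ)
    (layer : C → ℕ) (hlayer : ∀ c, layer c ≤ m)
    (hsurj : ∀ j ≤ m, ∃ c, layer c = j)
    (hfix : ∀ i c, layer c = 0 → σ i c = c)
    (hdown : ∀ i c j, layer c = j + 1 → layer (σ i c) = j)
    (f0 : ℝ) (f : Fin k → ℝ)
    (hval : f0 + ∑ i, f i = 0) (hf0 : f0 ≠ 0) :
    Module.finrank ℝ
        (Module.End.maxGenEigenspace
          (Matrix.toLin'
            (f0 • (1 : Matrix C C ℝ) +
              ∑ i, f i • Matrix.of (fun c c' => if c' = σ i c then (1 : ℝ) else 0)))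
          0) =
      (Finset.univ.filter (fun c => layer c = 0)).card := by
  set J : Module.End ℝ (C → ℝ) := Matrix.toLin'
      (f0 • (1 : Matrix C C ℝ) +
        ∑ i, f i • Matrix.of (fun c c' => if c' = σ i c then (1 : ℝ) else 0)) with hJ
  have happ : ∀ (v : C → ℝ) (c : C), J v c = f0 * v c + ∑ i, f i * v (σ i c) := by
    intro v c
    rw [hJ, Matrix.toLin'_apply]
    simp only [Matrix.mulVec, dotProduct, Matrix.add_apply, Matrix.smul_apply,
      Matrix.sum_apply, Matrix.one_apply, Matrix.of_apply, smul_eq_mul, add_mul,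
      Finset.sum_add_distrib, Finset.sum_mul, mul_ite, mul_one, mul_zero, ite_mul, zero_mul]
    rw [Finset.sum_ite_eq, if_pos (Finset.mem_univ c), Finset.sum_comm]
    congr 1
    refine Finset.sum_congr rfl fun i _ => ?_
    rw [Finset.sum_ite_eq', if_pos (Finset.mem_univ _)]
  have h0 : ∀ (v : C → ℝ) (c : C), layer c = 0 → J v c = 0 := by
    intro v c hc
    rw [happ]
    have : ∀ i : Fin k, σ i c = c := fun i => hfix i c hc
    simp only [this]
    rw [← Finset.sum_mul, ← add_mul, hval, zero_mul]
  have hinj : ∀ v : C → ℝ, (∀ c, layer c = 0 → v c = 0) → J v = 0 → v = 0 := by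
    intro v hv hJv
    have H : ∀ (n : ℕ) (c : C), layer c = n → v c = 0 := by
      intro n
      induction n with
      | zero => exact fun c hc => hv c hc
      | succ n ih =>
        intro c hc
        have h1 : J v c = 0 := by rw [hJv]; rfl
        rw [happ] at h1
        have h2 : ∀ i : Fin k, v (σ i c) = 0 := fun i => ih _ (hdown i c n hc)
        simp only [h2, mul_zero, Finset.sum_const_zero, add_zero] at h1
        exact (mul_eq_zero.1 h1).resolve_left hf0
    funext c; exact H (layer c) c rfl
  have hker : ∀ (n : ℕ) (v : C → ℝ), (J ^ n) v = 0 → (∀ c, layer c = 0 → v c = 0) → v = 0 := by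
    intro n
    induction n with
    | zero => intro v hv _; simpa using hv
    | succ n ih =>
      intro v hv hv0
      have h1 : (J ^ n) (J v) = 0 := by
        rw [← Module.End.mul_apply, ← pow_succ]
        exact hv
      have h2 : J v = 0 := ih (J v) h1 (fun c hc => h0 v c hc)
      exact hinj v hv0 h2
  have hmax : Module.End.maxGenEigenspace J 0 = LinearMap.ker J := by
    ext v
    rw [Module.End.mem_maxGenEigenspace, LinearMap.mem_ker]
    constructor
    · rintro ⟨r, hr⟩
      simp only [zero_smul, sub_zero] at hr
      have h1 : (J ^ r) (J v) = 0 := by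
        have h2 : (J ^ r) (J v) = J ((J ^ r) v) := by
          rw [← Module.End.mul_apply, ← Module.End.mul_apply, ← pow_succ, ← pow_succ']
        rw [h2, hr, map_zero]
      exact hker r (J v) h1 (fun c hc => h0 v c hc)
    · intro hv
      exact ⟨1, by simpa using hv⟩
  rw [hmax]
  -- restriction map to layer 0
  set C0 := {c : C // layer c = 0}
  have hcard : (Finset.univ.filter (fun c => layer c = 0)).card = Fintype.card C0 := by
    rw [Fintype.card_subtype]
  set R : (C → ℝ) →ₗ[ℝ] (C0 → ℝ) := LinearMap.funLeft ℝ ℝ (Subtype.val) with hR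
  have hRsurj : Function.Surjective R := by
    intro u
    refine ⟨fun c => if h : layer c = 0 then u ⟨c, h⟩ else 0, ?_⟩
    funext c
    simp [hR, LinearMap.funLeft, c.2]
  have hrange : LinearMap.range J ≤ LinearMap.ker R := by
    rintro w ⟨v, rfl⟩
    rw [LinearMap.mem_ker]
    funext c
    exact h0 v c c.2
  have hinj2 : Function.Injective (R.comp (LinearMap.ker J).subtype) := by
    rw [← LinearMap.ker_eq_bot, LinearMap.ker_eq_bot']
    rintro ⟨v, hv⟩ h
    have hv0 : ∀ c, layer c = 0 → v c = 0 := by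
      intro c hc
      simpa [hR, LinearMap.funLeft] using congrFun h ⟨c, hc⟩
    have := hinj v hv0 (LinearMap.mem_ker.1 hv)
    exact Subtype.ext this
  have e1 : Module.finrank ℝ (LinearMap.range J) + Module.finrank ℝ (LinearMap.ker J)
      = Fintype.card C := by
    rw [LinearMap.finrank_range_add_finrank_ker J]
    simp [Module.finrank_pi]
  have e2 : Module.finrank ℝ (LinearMap.range R) + Module.finrank ℝ (LinearMap.ker R)
      = Fintype.card C := by
    rw [LinearMap.finrank_range_add_finrank_ker R]
    simp [Module.finrank_pi]
  have e3 : Module.finrank ℝ (LinearMap.range R) = Fintype.card C0 := by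
    rw [LinearMap.range_eq_top.2 hRsurj]
    simp [Module.finrank_pi]
  have e4 : Module.finrank ℝ (LinearMap.range J) ≤ Module.finrank ℝ (LinearMap.ker R) :=
    Submodule.finrank_mono hrange
  have e5 : Module.finrank ℝ (LinearMap.ker J) ≤ Fintype.card C0 := by
    have := LinearMap.finrank_le_finrank_of_injective hinj2
    simpa [Module.finrank_pi] using this
  rw [hcard]
  omega
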